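/- In the finite discrete S-IntroVAE setting, for every encoder q and decoder d, the decoder objective satisfies the identity L_d(q,d) = ∑_x p_data x · log(p_data x) − KL(p_data ‖ p_d) − γ·H(p_d) − ∑_x p_data x · KL(q x ‖ post x) − γ·∑_x p_d x · KL(q x ‖ post x), where KL(q x ‖ post x) = ∑_z q x z · log(q x z / post x z), KL(p_data ‖ p_d) = ∑_x p_data x · log(p_data x / p_d x) and H(p_d) = −∑_x p_d x · log(p_d x). -/
import Mathlib


open Finset

theorem stmt_6 {X Z : Type*} [Fintype X] [Fintype Z] [Nonempty X] [Nonempty Z]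
    (pz : Z → ℝ) (hpz : ∀ z, 0 < pz z) (hpz_sum : ∑ z, pz z = 1)
    (d : Z → X → ℝ) (hd : ∀ z x, 0 < d z x) (hd_sum : ∀ z, ∑ x, d z x = 1)
    (q : X → Z → ℝ) (hq : ∀ x z, 0 < q x z) (hq_sum : ∀ x, ∑ z, q x z = 1)
    (pdata : X → ℝ) (hpdata : ∀ x, 0 < pdata x) (hpdata_sum : ∑ x, pdata x = 1)
    (α γ : ℝ) (hα : 1 ≤ α) (hγ : 0 ≤ γ)
    (pd : X → ℝ) (hpd : ∀ x, pd x = ∑ z, pz z * d z x)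
    (post : X → Z → ℝ) (hpost : ∀ x z, post x z = pz z * d z x / pd x)
    (W : X → ℝ)
    (hW : ∀ x, W x = (∑ z, q x z * Real.log (d z x)) -
      ∑ z, q x z * Real.log (q x z / pz z))
    (Ld : ℝ) (hLd : Ld = (∑ x, pdata x * W x) + γ * ∑ x, pd x * W x) :
    Ld = (∑ x, pdata x * Real.log (pdata x))
      - (∑ x, pdata x * Real.log (pdata x / pd x))
      - γ * (-∑ x, pd x * Real.log (pd x))
      - (∑ x, pdata x * ∑ z, q x z * Real.log (q x z / post x z))
      - γ * ∑ x, pd x * ∑ z, q x z * Real.log (q x z / post x z) := by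
  have hpd_pos : ∀ x, 0 < pd x := by
    intro x
    rw [hpd]
    exact Finset.sum_pos (fun z _ => mul_pos (hpz z) (hd z x)) univ_nonempty
  have hKL : ∀ x, ∑ z, q x z * Real.log (q x z / post x z)
      = Real.log (pd x) - W x := by
    intro x
    have : ∀ z, q x z * Real.log (q x z / post x z)
        = q x z * Real.log (q x z / pz z) - q x z * Real.log (d z x)
          + q x z * Real.log (pd x) := by
      intro z
      rw [hpost]
      rw [div_div_eq_mul_div, Real.log_div (mul_pos (hq x z) (hpd_pos x)).ne' (mul_pos (hpz z) (hd z x)).ne',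
        Real.log_mul (ne_of_gt (hq x z)) (ne_of_gt (hpd_pos x)),
        Real.log_mul (ne_of_gt (hpz z)) (ne_of_gt (hd z x)),
        Real.log_div (ne_of_gt (hq x z)) (ne_of_gt (hpz z))]
      ring
    rw [Finset.sum_congr rfl (fun z _ => this z)]
    rw [Finset.sum_add_distrib, Finset.sum_sub_distrib, ← Finset.sum_mul, hq_sum, hW]
    ring
  have hW' : ∀ x, W x = Real.log (pd x) - ∑ z, q x z * Real.log (q x z / post x z) := by
    intro x; rw [hKL]; ring
  have hlogdiv : ∀ x, pdata x * Real.log (pdata x / pd x)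
      = pdata x * Real.log (pdata x) - pdata x * Real.log (pd x) := by
    intro x
    rw [Real.log_div (ne_of_gt (hpdata x)) (ne_of_gt (hpd_pos x))]; ring
  rw [hLd]
  rw [Finset.sum_congr rfl (fun x _ => by rw [hW' x, mul_sub] :
    ∀ x ∈ univ, pdata x * W x = pdata x * Real.log (pd x)
      - pdata x * ∑ z, q x z * Real.log (q x z / post x z))]
  rw [Finset.sum_congr rfl (fun x _ => by rw [hW' x, mul_sub] :
    ∀ x ∈ univ, pd x * W x = pd x * Real.log (pd x)
      - pd x * ∑ z, q x z * Real.log (q x z / post x z))]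
  rw [Finset.sum_congr rfl (fun x _ => hlogdiv x :
    ∀ x ∈ univ, pdata x * Real.log (pdata x / pd x)
      = pdata x * Real.log (pdata x) - pdata x * Real.log (pd x))]
  rw [Finset.sum_sub_distrib, Finset.sum_sub_distrib, Finset.sum_sub_distrib]
  ring
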